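/- Let G be a finitely generated group, X a real Banach space, and V ⊆ X* a weak-* dense linear subspace. Let K ⊆ ℓ∞(G, X) be a nonempty, bounded, ℓ∞(G)-convex subset that is compact in the ultra-weak topology induced by V. Let α be a G-affine action of G on K such that each map α_g : K → K is continuous for the ultra-weak topology. Then there exists a point x₀ ∈ K with α_g(x₀) = x₀ for all g ∈ G. -/

import Mathlib

open scoped ENNReal
set_option linter.unusedSectionVars false

noncomputable section

variable {G : Type*} [Group G]
variable {X : Type*} [NormedAddCommGroup X] [NormedSpace ℝ X]

/-- Build an element of `ℓ∞(G, Z)` from a uniformly bounded function. -/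
def linfElem {Z : Type*} [NormedAddCommGroup Z] (f : G → Z) (C : ℝ) (h : ∀ g, ‖f g‖ ≤ C) :
    lp (fun _ : G => Z) ∞ :=
  ⟨f, memℓp_infty ⟨C, by rintro r ⟨g, rfl⟩; exact h g⟩⟩

@[simp] lemma linfElem_apply {Z : Type*} [NormedAddCommGroup Z] (f : G → Z) (C : ℝ)
    (h : ∀ g, ‖f g‖ ≤ C) (g : G) : linfElem f C h g = f g := rfl

/-- The action `•` of `ℓ∞(G)` on `ℓ∞(G, Z)`: `(a • f)_g = a_g f_g`. -/
def bullet {Z : Type*} [NormedAddCommGroup Z] [NormedSpace ℝ Z]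
    (a : lp (fun _ : G => ℝ) ∞) (f : lp (fun _ : G => Z) ∞) :
    lp (fun _ : G => Z) ∞ :=
  linfElem (fun g => a g • f g) (‖a‖ * ‖f‖) (by
    intro g
    rw [norm_smul]
    exact mul_le_mul (lp.norm_apply_le_norm ENNReal.top_ne_zero a g)
      (lp.norm_apply_le_norm ENNReal.top_ne_zero f g) (norm_nonneg _) (norm_nonneg _))

/-- The translation action of `G` on `ℓ∞(G)`: `(g * a)_h = a_{g⁻¹ h}`. -/
def gstar (g : G) (a : lp (fun _ : G => ℝ) ∞) : lp (fun _ : G => ℝ) ∞ :=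
  linfElem (fun h => a (g⁻¹ * h)) ‖a‖
    (fun h => lp.norm_apply_le_norm ENNReal.top_ne_zero a _)

/-- A set `K ⊆ ℓ∞(G, X)` is `ℓ∞(G)`-convex if it is stable under combinations
`∑ aᵢ • xᵢ` with `aᵢ ∈ ℓ∞(G)` nonnegative, `∑ aᵢ = 1_G` and `xᵢ ∈ K`. -/
def LinfConvex (K : Set (lp (fun _ : G => X) ∞)) : Prop :=
  ∀ (n : ℕ) (a : Fin n → lp (fun _ : G => ℝ) ∞) (x : Fin n → lp (fun _ : G => X) ∞),
    (∀ (i : Fin n) (h : G), 0 ≤ a i h) → (∀ h : G, ∑ i, a i h = 1) →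
    (∀ i, x i ∈ K) → (∑ i, bullet (a i) (x i)) ∈ K

/-- A family of maps `α_g : K → K` is a `G`-affine action if `α_e = id`,
`α_{gh} = α_g ∘ α_h`, and `α_g (a • x + b • y) = (g * a) • α_g x + (g * b) • α_g y`
for all nonnegative `a, b ∈ ℓ∞(G)` with `a + b = 1_G`. -/
def IsGAffineAction (K : Set (lp (fun _ : G => X) ∞)) (α : G → K → K) : Prop :=
  (∀ x : K, α 1 x = x) ∧
  (∀ (g h : G) (x : K), α (g * h) x = α g (α h x)) ∧
  (∀ (g : G) (a b : lp (fun _ : G => ℝ) ∞),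
    (∀ h : G, 0 ≤ a h) → (∀ h : G, 0 ≤ b h) → (∀ h : G, a h + b h = 1) →
    ∀ x y z : K, (z : lp (fun _ : G => X) ∞) = bullet a ↑x + bullet b ↑y →
      (α g z : lp (fun _ : G => X) ∞) =
        bullet (gstar g a) ↑(α g x) + bullet (gstar g b) ↑(α g y))

/-- A map `T : K → ℓ∞(G)` is `ℓ∞(G)`-convex if `T (a • x + b • y) = a • T x + b • T y`
for all nonnegative `a, b ∈ ℓ∞(G)` with `a + b = 1_G`. -/
def IsLinfConvexMap (K : Set (lp (fun _ : G => X) ∞)) (T : K → lp (fun _ : G => ℝ) ∞) :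
    Prop :=
  ∀ (a b : lp (fun _ : G => ℝ) ∞),
    (∀ h : G, 0 ≤ a h) → (∀ h : G, 0 ≤ b h) → (∀ h : G, a h + b h = 1) →
    ∀ x y z : K, (z : lp (fun _ : G => X) ∞) = bullet a ↑x + bullet b ↑y →
      T z = bullet a (T x) + bullet b (T y)

/-- The action of `G` on maps `T : K → ℓ∞(G)`: `(g · T)(x) = g * (T (α_{g⁻¹} x))`. -/
def dotT (K : Set (lp (fun _ : G => X) ∞)) (α : G → K → K) (g : G)
    (T : K → lp (fun _ : G => ℝ) ∞) : K → lp (fun _ : G => ℝ) ∞ :=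
  fun x => gstar g (T (α g⁻¹ x))

end

section topologies

variable (G : Type*) [Group G]
variable (X : Type*) [NormedAddCommGroup X] [NormedSpace ℝ X]

/-- The weak-* topology on `ℓ∞(G)` as the dual of `ℓ₁(G)`: the coarsest topology making
`b ↦ ∑_g a_g b_g` continuous for every `a ∈ ℓ₁(G)`. -/
noncomputable def wstarLinf : TopologicalSpace (lp (fun _ : G => ℝ) ∞) :=
  ⨅ a : lp (fun _ : G => ℝ) 1,
    TopologicalSpace.induced (fun b : lp (fun _ : G => ℝ) ∞ => ∑' g : G, a g * b g)
      inferInstance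

/-- The ultra-weak topology on `ℓ∞(G, X)` induced by a subspace `V ⊆ X*`: the coarsest
topology making each `T_φ : ℓ∞(G, X) → ℓ∞(G)`, `(T_φ f)(g) = φ(f_g)`, continuous for
`φ ∈ V`, with `ℓ∞(G)` carrying its weak-* topology as the dual of `ℓ₁(G)`; equivalently,
the coarsest topology making `f ↦ ∑_g a_g φ(f_g)` continuous for all `φ ∈ V`,
`a ∈ ℓ₁(G)`. -/
noncomputable def ultraweak (V : Submodule ℝ (X →L[ℝ] ℝ)) :
    TopologicalSpace (lp (fun _ : G => X) ∞) :=
  ⨅ (φ : V) (a : lp (fun _ : G => ℝ) 1),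
    TopologicalSpace.induced
      (fun f : lp (fun _ : G => X) ∞ => ∑' g : G, a g * (φ : X →L[ℝ] ℝ) (f g))
      inferInstance

end topologies

section myAux

open Filter

variable {G : Type*} [Group G]
variable {X : Type*} [NormedAddCommGroup X] [NormedSpace ℝ X]

/-- The indicator function of a set, as an element of `ℓ∞(G)`. -/
noncomputable def myInd (S : Set G) : lp (fun _ : G => ℝ) ∞ :=
  linfElem (S.indicator fun _ => (1 : ℝ)) 1 (by
    intro g
    by_cases h : g ∈ S <;>
      simp [Set.indicator_of_mem, Set.indicator_of_notMem, h])

@[simp] lemma myInd_apply (S : Set G) (g : G) :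
    myInd S g = S.indicator (fun _ => (1 : ℝ)) g := rfl

lemma myInd_nonneg (S : Set G) (g : G) : 0 ≤ myInd S g := by
  by_cases h : g ∈ S <;>
    simp [Set.indicator_of_mem, Set.indicator_of_notMem, h]

lemma myInd_add_compl (S : Set G) (g : G) : myInd S g + myInd Sᶜ g = 1 := by
  by_cases h : g ∈ S <;>
    simp [Set.indicator_of_mem, Set.indicator_of_notMem, h]

@[simp] lemma bullet_apply (a : lp (fun _ : G => ℝ) ∞) (f : lp (fun _ : G => X) ∞) (g : G) :
    bullet a f g = a g • f g := rfl

@[simp] lemma gstar_apply (g : G) (a : lp (fun _ : G => ℝ) ∞) (h : G) :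
    gstar g a h = a (g⁻¹ * h) := rfl

@[simp] lemma myInd_self (k : G) : myInd ({k} : Set G) k = 1 := by
  simp [myInd_apply]

lemma myInd_ne {h k : G} (hne : h ≠ k) : myInd ({k} : Set G) h = 0 := by
  simp [myInd_apply, Set.indicator_of_notMem, hne]

@[simp] lemma myInd_compl_self (k : G) : myInd (({k} : Set G)ᶜ) k = 0 := by
  simp [myInd_apply]

lemma myInd_compl_ne {h k : G} (hne : h ≠ k) : myInd (({k} : Set G)ᶜ) h = 1 := by
  simp [myInd_apply, Set.indicator_of_mem, hne]

lemma myDenseHit {Z : Type*} {t : TopologicalSpace Z} {s : Set Z} (hs : @Dense Z t s)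
    {U : Set Z} (hU : @IsOpen Z t U) (hne : U.Nonempty) : ∃ z ∈ s, z ∈ U := by
  letI := t
  exact hs.exists_mem_open hU hne

lemma myOpenNe {Z : Type*} {ι : Type*} (p : ι → Z → ℝ) (i : ι) :
    @IsOpen Z (⨅ j, TopologicalSpace.induced (p j) inferInstance) {z : Z | p i z ≠ 0} := by
  letI : TopologicalSpace Z := ⨅ j, TopologicalSpace.induced (p j) inferInstance
  have hc : Continuous (p i) := continuous_iff_le_induced.mpr (iInf_le _ i)
  exact hc.isOpen_preimage ({0}ᶜ) isOpen_compl_singleton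

lemma myT2 {Z : Type*} (t : TopologicalSpace Z)
    (h : ∀ x y : Z, x ≠ y → ∃ f : Z → ℝ, @Continuous Z ℝ t _ f ∧ f x ≠ f y) :
    @T2Space Z t := by
  letI := t
  refine ⟨fun x y hxy => ?_⟩
  obtain ⟨f, hf, hne⟩ := h x y hxy
  exact separated_by_continuous hf hne

lemma myCompactClosed {Z : Type*} (t : TopologicalSpace Z) (ht : @T2Space Z t)
    (s : Set Z) (h : @IsCompact Z t s) : @IsClosed Z t s := by
  letI := t
  exact h.isClosed

lemma myMemOfTendsto {Z : Type*} (t : TopologicalSpace Z) {ι : Type*} [SemilatticeSup ι]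
    [Nonempty ι] (s : Set Z) (hcl : @IsClosed Z t s) (f : ι → Z) (z : Z)
    (hf : Filter.Tendsto f Filter.atTop (@nhds Z t z)) (hm : ∀ i, f i ∈ s) : z ∈ s := by
  letI := t
  exact hcl.mem_of_tendsto hf (Filter.Eventually.of_forall hm)

lemma myTendstoIInf {Z : Type*} {ι κ ι' : Type*} (p : ι → κ → Z → ℝ)
    (l : Filter ι') (f : ι' → Z) (z : Z)
    (h : ∀ i j, Filter.Tendsto (fun x => p i j (f x)) l (nhds (p i j z))) :
    Filter.Tendsto f l
      (@nhds Z (⨅ i, ⨅ j, TopologicalSpace.induced (p i j) inferInstance) z) := by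
  simp only [_root_.nhds_iInf, nhds_induced]
  rw [Filter.tendsto_iInf]
  intro i
  rw [Filter.tendsto_iInf]
  intro j
  rw [Filter.tendsto_comap_iff]
  exact h i j

end myAux

/-- **A fixed point theorem for actions on `ℓ∞(G, X)`.**  Let `G` be a finitely generated
group, `X` a real Banach space, and `V ⊆ X*` a weak-* dense subspace.  Let
`K ⊆ ℓ∞(G, X)` be a nonempty, bounded, `ℓ∞(G)`-convex subset which is compact in the
ultra-weak topology induced by `V`, and let `α` be a `G`-affine action of `G` on `K`
such that each `α_g` is ultra-weakly continuous.  Then `α` has a fixed point in `K`. -/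
theorem fixed_point_of_G_affine_action
    {G : Type*} [Group G] [Group.FG G]
    {X : Type*} [NormedAddCommGroup X] [NormedSpace ℝ X] [CompleteSpace X]
    (V : Submodule ℝ (X →L[ℝ] ℝ))
    (hV : @Dense (X →L[ℝ] ℝ)
      (⨅ x : X, TopologicalSpace.induced (fun φ : X →L[ℝ] ℝ => φ x) inferInstance)
      (V : Set (X →L[ℝ] ℝ)))
    (K : Set (lp (fun _ : G => X) ∞))
    (hne : K.Nonempty)
    (hbdd : ∃ C : ℝ, ∀ f ∈ K, ‖f‖ ≤ C)
    (hconv : LinfConvex K)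
    (hcpt : @IsCompact _ (ultraweak G X V) K)
    (α : G → K → K) (hα : IsGAffineAction K α)
    (hcont : ∀ g : G,
      @Continuous _ _ (TopologicalSpace.induced Subtype.val (ultraweak G X V))
        (TopologicalSpace.induced Subtype.val (ultraweak G X V)) (α g)) :
    ∃ x₀ : K, ∀ g : G, α g x₀ = x₀ := by
  classical
  obtain ⟨C, hC⟩ := hbdd
  obtain ⟨xx, hxx⟩ := hne
  -- coordinatewise bound on elements of K
  have hcoord : ∀ f ∈ K, ∀ g : G, ‖(f : lp (fun _ : G => X) ∞) g‖ ≤ C := fun f hf g =>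
    (lp.norm_apply_le_norm ENNReal.top_ne_zero f g).trans (hC f hf)
  have hC0 : (0 : ℝ) ≤ C := le_trans (norm_nonneg _) (hC xx hxx)
  set bp : K := ⟨xx, hxx⟩ with hbp
  set y : G → K := fun h => α h bp with hy
  set x0fun : G → X := fun h => (↑(y h) : lp (fun _ : G => X) ∞) h with hx0fun
  have hx0b : ∀ h, ‖x0fun h‖ ≤ C := fun h => hcoord _ (y h).2 h
  set x0 : lp (fun _ : G => X) ∞ := linfElem x0fun C hx0b with hx0
  -- two-point ℓ∞-convexity
  have hconv2 : ∀ (a b : lp (fun _ : G => ℝ) ∞) (u w : lp (fun _ : G => X) ∞),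
      (∀ h, 0 ≤ a h) → (∀ h, 0 ≤ b h) → (∀ h, a h + b h = 1) → u ∈ K → w ∈ K →
      bullet a u + bullet b w ∈ K := by
    intro a b u w ha hb hab hu hw
    have h2 := hconv 2 ![a, b] ![u, w]
      (by intro i h; fin_cases i <;> simp [ha h, hb h])
      (by intro h
          have : (![a, b] 0) h + (![a, b] 1) h = 1 := hab h
          simpa [Fin.sum_univ_two] using this)
      (by intro i; fin_cases i <;> simpa)
    simpa [Fin.sum_univ_two] using h2
  -- the approximating net
  set xFfun : Finset G → G → X := fun F h => if h ∈ F then x0fun h else xx h with hxFfun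
  have hxFb : ∀ F h, ‖xFfun F h‖ ≤ C := by
    intro F h
    by_cases hh : h ∈ F
    · simpa [hxFfun, hh] using hx0b h
    · simpa [hxFfun, hh] using hcoord _ hxx h
  set xF : Finset G → lp (fun _ : G => X) ∞ := fun F => linfElem (xFfun F) C (hxFb F)
    with hxF
  have hxFK : ∀ F : Finset G, xF F ∈ K := by
    intro F
    induction F using Finset.induction_on with
    | empty =>
      have : xF ∅ = xx := lp.ext (funext fun h => by simp [hxF, hxFfun])
      rwa [this]
    | @insert k F hk ih =>
      have hrw : xF (insert k F) =
          bullet (myInd {k}) (↑(y k) : lp (fun _ : G => X) ∞) +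
            bullet (myInd ({k} : Set G)ᶜ) (xF F) := by
        apply lp.ext
        funext h
        have hcoe : (bullet (myInd {k}) (↑(y k) : lp (fun _ : G => X) ∞) +
            bullet (myInd ({k} : Set G)ᶜ) (xF F)) h =
            bullet (myInd {k}) (↑(y k) : lp (fun _ : G => X) ∞) h +
            bullet (myInd ({k} : Set G)ᶜ) (xF F) h :=
          congrFun (lp.coeFn_add _ _) h
        show xF (insert k F) h = _
        rw [hcoe, bullet_apply, bullet_apply]
        by_cases hh : h = k
        · subst hh
          rw [myInd_self, myInd_compl_self]
          simp [hxF, hxFfun, hx0fun]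
        · rw [myInd_ne hh, myInd_compl_ne hh]
          have hmem : h ∈ insert k F ↔ h ∈ F := by simp [hh]
          simp [hxF, hxFfun, hmem, hh]
      rw [hrw]
      exact hconv2 _ _ _ _ (myInd_nonneg _) (myInd_nonneg _)
        (myInd_add_compl _) (y k).2 ih
  -- separation of points by the ultraweak functionals
  have key : ∀ f f' : lp (fun _ : G => X) ∞, f ≠ f' →
      ∃ (φ : V) (a : lp (fun _ : G => ℝ) 1),
        (∑' g : G, a g * (φ : X →L[ℝ] ℝ) (f g)) ≠
        (∑' g : G, a g * (φ : X →L[ℝ] ℝ) (f' g)) := by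
    intro f f' hff
    have hex : ∃ g : G, f g ≠ f' g := by
      by_contra hcon
      push_neg at hcon
      exact hff (lp.ext (funext hcon))
    obtain ⟨g, hg⟩ := hex
    have hv : f g - f' g ≠ 0 := sub_ne_zero.mpr hg
    obtain ⟨ψ, -, hψ⟩ := exists_dual_vector ℝ (f g - f' g) (norm_ne_zero_iff.mpr hv)
    have hUopen :
        @IsOpen _ (⨅ x : X, TopologicalSpace.induced
            (fun φ : X →L[ℝ] ℝ => φ x) inferInstance)
          {φ : X →L[ℝ] ℝ | φ (f g - f' g) ≠ 0} :=
      myOpenNe (fun (x : X) (φ : X →L[ℝ] ℝ) => φ x) (f g - f' g)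
    have hUne : ({φ : X →L[ℝ] ℝ | φ (f g - f' g) ≠ 0}).Nonempty := by
      refine ⟨ψ, ?_⟩
      simp only [Set.mem_setOf_eq, hψ]
      exact norm_ne_zero_iff.mpr hv
    obtain ⟨φ, hφV, hφ⟩ := myDenseHit hV hUopen hUne
    refine ⟨⟨φ, hφV⟩, lp.single 1 g (1 : ℝ), ?_⟩
    have hsum : ∀ u : lp (fun _ : G => X) ∞,
        (∑' g' : G, (lp.single 1 g (1 : ℝ) : lp (fun _ : G => ℝ) 1) g' * φ (u g')) =
          φ (u g) := by
      intro u
      rw [tsum_eq_single g]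
      · rw [lp.single_apply_self, one_mul]
      · intro b hb
        rw [lp.single_apply_ne 1 g _ hb, zero_mul]
    rw [hsum f, hsum f']
    intro hEq
    apply hφ
    simp only [Set.mem_setOf_eq]
    rw [map_sub, hEq, sub_self]
  -- the ultraweak topology is Hausdorff
  have hT2 : @T2Space _ (ultraweak G X V) := by
    refine myT2 _ fun f f' hff => ?_
    obtain ⟨φ, a, hval⟩ := key f f' hff
    refine ⟨fun f : lp (fun _ : G => X) ∞ => ∑' g : G, a g * (φ : X →L[ℝ] ℝ) (f g),
      ?_, hval⟩
    rw [@continuous_iff_le_induced _ _ _ (ultraweak G X V)]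
    exact iInf_le_of_le φ (iInf_le _ a)
  -- summability of ℓ¹ norms
  have ha1 : ∀ a : lp (fun _ : G => ℝ) 1, Summable fun g : G => ‖a g‖ := by
    intro a
    have := (lp.memℓp a).summable (by norm_num : (0:ℝ) < (1 : ℝ≥0∞).toReal)
    simpa using this
  -- convergence of the net to x0 in the ultraweak topology
  have hnet : Filter.Tendsto xF Filter.atTop (@nhds _ (ultraweak G X V) x0) := by
    refine myTendstoIInf
      (fun (φ : V) (a : lp (fun _ : G => ℝ) 1) (f : lp (fun _ : G => X) ∞) =>
        ∑' g : G, a g * (φ : X →L[ℝ] ℝ) (f g)) Filter.atTop xF x0 ?_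
    intro φ a
    set c : G → ℝ := fun g => ‖a g‖ * (‖(φ : X →L[ℝ] ℝ)‖ * (2 * C)) with hc
    have hcs : Summable c := (ha1 a).mul_right _
    have hsummand : ∀ (u : lp (fun _ : G => X) ∞), (∀ g, ‖u g‖ ≤ C) →
        Summable fun g : G => a g * (φ : X →L[ℝ] ℝ) (u g) := by
      intro u hu
      apply Summable.of_norm_bounded (g := fun g => ‖a g‖ * (‖(φ : X →L[ℝ] ℝ)‖ * C))
        ((ha1 a).mul_right _)
      intro g
      rw [norm_mul]
      refine mul_le_mul_of_nonneg_left ?_ (norm_nonneg _)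
      calc ‖(φ : X →L[ℝ] ℝ) (u g)‖ ≤ ‖(φ : X →L[ℝ] ℝ)‖ * ‖u g‖ :=
            (φ : X →L[ℝ] ℝ).le_opNorm _
        _ ≤ ‖(φ : X →L[ℝ] ℝ)‖ * C :=
            mul_le_mul_of_nonneg_left (hu g) (norm_nonneg _)
    have hxFcoord : ∀ F g, ‖xF F g‖ ≤ C := fun F g => hxFb F g
    have hx0coord : ∀ g, ‖x0 g‖ ≤ C := hx0b
    have hdz : Filter.Tendsto (fun F : Finset G =>
        (∑' g : G, a g * (φ : X →L[ℝ] ℝ) (xF F g)) -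
        (∑' g : G, a g * (φ : X →L[ℝ] ℝ) (x0 g))) Filter.atTop (nhds 0) := by
      refine squeeze_zero_norm (a := fun F : Finset G => ∑' g : {x : G // x ∉ F}, c g) ?_ ?_
      · intro F
        have hsub : (∑' g : G, a g * (φ : X →L[ℝ] ℝ) (xF F g)) -
            (∑' g : G, a g * (φ : X →L[ℝ] ℝ) (x0 g)) =
            ∑' g : G, (a g * (φ : X →L[ℝ] ℝ) (xF F g) -
              a g * (φ : X →L[ℝ] ℝ) (x0 g)) :=
          (Summable.tsum_sub (hsummand _ (hxFcoord F)) (hsummand _ hx0coord)).symm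
        have hsupp : (∑' g : G, (a g * (φ : X →L[ℝ] ℝ) (xF F g) -
            a g * (φ : X →L[ℝ] ℝ) (x0 g))) =
            ∑' g : {x : G // x ∉ F}, (a (g : G) * (φ : X →L[ℝ] ℝ) (xF F (g : G)) -
              a (g : G) * (φ : X →L[ℝ] ℝ) (x0 (g : G))) := by
          refine (tsum_subtype_eq_of_support_subset ?_).symm
          intro g hg
          by_contra hgF
          have hgf : g ∈ F := not_not.mp hgF
          have hxeq : (xF F : lp (fun _ : G => X) ∞) g = x0 g := by
            simp [hxF, hxFfun, hx0, hgf]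
          exact hg (by simp only [hxeq, sub_self])
        rw [hsub, hsupp]
        refine tsum_of_norm_bounded
          ((hcs.subtype {x : G | x ∉ F}).hasSum) ?_
        intro g
        rw [← mul_sub, norm_mul, hc]
        refine mul_le_mul_of_nonneg_left ?_ (norm_nonneg _)
        rw [← map_sub]
        calc ‖(φ : X →L[ℝ] ℝ) (xF F (g : G) - x0 (g : G))‖
            ≤ ‖(φ : X →L[ℝ] ℝ)‖ * ‖xF F (g : G) - x0 (g : G)‖ :=
              (φ : X →L[ℝ] ℝ).le_opNorm _
          _ ≤ ‖(φ : X →L[ℝ] ℝ)‖ * (2 * C) := by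
              refine mul_le_mul_of_nonneg_left ?_ (norm_nonneg _)
              calc ‖xF F (g : G) - x0 (g : G)‖ ≤ ‖xF F (g : G)‖ + ‖x0 (g : G)‖ :=
                    norm_sub_le _ _
                _ ≤ C + C := add_le_add (hxFcoord F _) (hx0coord _)
                _ = 2 * C := by ring
      · exact tendsto_tsum_compl_atTop_zero c
    have hfin := hdz.add_const (∑' g : G, a g * (φ : X →L[ℝ] ℝ) (x0 g))
    rw [zero_add] at hfin
    refine hfin.congr fun F => ?_
    abel
  -- x0 belongs to K
  have hx0K : x0 ∈ K :=
    myMemOfTendsto (ultraweak G X V) K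
      (myCompactClosed (ultraweak G X V) hT2 K hcpt) xF x0 hnet hxFK
  -- the fixed point
  refine ⟨⟨x0, hx0K⟩, ?_⟩
  intro g
  apply Subtype.ext
  apply lp.ext
  funext h
  set k : G := g⁻¹ * h with hk
  -- decompose x0 as an ℓ∞-convex combination at the coordinate k
  have hdecomp : ((⟨x0, hx0K⟩ : K) : lp (fun _ : G => X) ∞) =
      bullet (myInd {k}) (↑(y k) : lp (fun _ : G => X) ∞) +
        bullet (myInd ({k} : Set G)ᶜ) (↑(⟨x0, hx0K⟩ : K) : lp (fun _ : G => X) ∞) := by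
    apply lp.ext
    funext m
    have hcoe : (bullet (myInd {k}) (↑(y k) : lp (fun _ : G => X) ∞) +
        bullet (myInd ({k} : Set G)ᶜ) x0) m =
        bullet (myInd {k}) (↑(y k) : lp (fun _ : G => X) ∞) m +
        bullet (myInd ({k} : Set G)ᶜ) x0 m :=
      congrFun (lp.coeFn_add _ _) m
    show x0 m = _
    rw [hcoe, bullet_apply, bullet_apply]
    by_cases hm : m = k
    · subst hm
      rw [myInd_self, myInd_compl_self]
      simp [hx0, hx0fun]
    · rw [myInd_ne hm, myInd_compl_ne hm]
      simp
  have haff := hα.2.2 g (myInd {k}) (myInd ({k} : Set G)ᶜ) (myInd_nonneg _)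
    (myInd_nonneg _) (myInd_add_compl _) (y k) ⟨x0, hx0K⟩ ⟨x0, hx0K⟩ hdecomp
  have hcoordeq : (↑(α g (⟨x0, hx0K⟩ : K)) : lp (fun _ : G => X) ∞) h =
      (bullet (gstar g (myInd {k})) (↑(α g (y k)) : lp (fun _ : G => X) ∞) +
        bullet (gstar g (myInd ({k} : Set G)ᶜ))
          (↑(α g (⟨x0, hx0K⟩ : K)) : lp (fun _ : G => X) ∞)) h := by
    conv_lhs => rw [haff]
  have hgik : g⁻¹ * h = k := rfl
  have hone : gstar g (myInd ({k} : Set G)) h = 1 := by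
    rw [gstar_apply, hgik, myInd_self]
  have hzero : gstar g (myInd ({k} : Set G)ᶜ) h = 0 := by
    rw [gstar_apply, hgik, myInd_compl_self]
  have hcoe2 : (bullet (gstar g (myInd {k}))
        (↑(α g (y k)) : lp (fun _ : G => X) ∞) +
      bullet (gstar g (myInd ({k} : Set G)ᶜ))
        (↑(α g ⟨x0, hx0K⟩) : lp (fun _ : G => X) ∞)) h =
      bullet (gstar g (myInd {k})) (↑(α g (y k)) : lp (fun _ : G => X) ∞) h +
      bullet (gstar g (myInd ({k} : Set G)ᶜ))
        (↑(α g ⟨x0, hx0K⟩) : lp (fun _ : G => X) ∞) h :=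
    congrFun (lp.coeFn_add _ _) h
  have hstep : (↑(α g ⟨x0, hx0K⟩) : lp (fun _ : G => X) ∞) h =
      (↑(α g (y k)) : lp (fun _ : G => X) ∞) h := by
    rw [hcoordeq, hcoe2, bullet_apply, bullet_apply, hone, hzero, one_smul, zero_smul,
      add_zero]
  show (↑(α g ⟨x0, hx0K⟩) : lp (fun _ : G => X) ∞) h = x0 h
  rw [hstep]
  -- now use the action property : α g (α k bp) = α (g * k) bp = α h bp
  have hcomp : α g (y k) = y h := by
    rw [hy]
    show α g (α k bp) = α h bp
    rw [← hα.2.1 g k bp]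
    congr 1
    rw [hk]
    group
  rw [hcomp]
  rfl
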